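/- arXiv:1106.4065 — 8 statements merged into one kernel-verified Lean document; each statement's English description precedes it below -/
import Mathlib

section
/- For n = 2m+1, define s(i,j) for 1 ≤ i < j ≤ 2m+1 by: s(i,j) = i if i ≤ m+1 and j - i ≤ m+1; s(i,j) = j - m - 1 if i ≤ m+1 and j - i ≥ m+2; s(i,j) = i - m - 1 if i ≥ m+2. Then for 1 ≤ t ≤ m the number of edges with s(i,j) = t is exactly 2m, and the number of edges with s(i,j) = m+1 is exactly m. -/
/-- Otsuki's sheet assignment for `K_{2m+1}`. -/
def oddSheet (m i j : ℕ) : ℕ :=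
  if i ≤ m + 1 ∧ j - i ≤ m + 1 then i
  else if i ≤ m + 1 then j - m - 1
  else i - m - 1

/-- In the canonical book representation of `K_{2m+1}`, each sheet `t` with
`1 ≤ t ≤ m` contains exactly `2m` edges, and the half-sheet `m+1` contains
exactly `m` edges. -/
theorem oddSheet_card (m : ℕ) (hm : 1 ≤ m) :
    (∀ t, 1 ≤ t → t ≤ m →
      (((Finset.Icc 1 (2 * m + 1)) ×ˢ (Finset.Icc 1 (2 * m + 1))).filter
        (fun p => p.1 < p.2 ∧ oddSheet m p.1 p.2 = t)).card = 2 * m) ∧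
    (((Finset.Icc 1 (2 * m + 1)) ×ˢ (Finset.Icc 1 (2 * m + 1))).filter
      (fun p => p.1 < p.2 ∧ oddSheet m p.1 p.2 = m + 1)).card = m := by
  constructor
  · intro t ht1 ht2
    have hset : (((Finset.Icc 1 (2 * m + 1)) ×ˢ (Finset.Icc 1 (2 * m + 1))).filter
        (fun p => p.1 < p.2 ∧ oddSheet m p.1 p.2 = t)) =
        (((Finset.Icc (t + 1) (t + m + 1)).image (fun j => (t, j)) ∪
          (Finset.Icc 1 (t - 1)).image (fun i => (i, t + m + 1))) ∪
          (Finset.Icc (t + m + 2) (2 * m + 1)).image (fun j => (t + m + 1, j))) := by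
      ext ⟨i, j⟩
      simp only [Finset.mem_filter, Finset.mem_product, Finset.mem_union,
        Finset.mem_image, Finset.mem_Icc, Prod.mk.injEq]
      simp only [oddSheet]
      constructor
      · rintro ⟨⟨⟨hi1, hi2⟩, hj1, hj2⟩, hij, hs⟩
        split_ifs at hs with h1 h2
        · exact Or.inl (Or.inl ⟨j, by omega, by omega, rfl⟩)
        · exact Or.inl (Or.inr ⟨i, by omega, rfl, by omega⟩)
        · exact Or.inr ⟨j, by omega, by omega, rfl⟩
      · intro h
        rcases h with (⟨j', hj', hte, hje⟩ | ⟨i', hi', hie, hje⟩) | ⟨j', hj', hie, hje⟩ <;>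
          subst hje <;> (try subst hie) <;> (try subst hte) <;>
          refine ⟨⟨⟨by omega, by omega⟩, by omega, by omega⟩, by omega, ?_⟩ <;>
          split_ifs <;> omega
    rw [hset]
    have d1 : Disjoint ((Finset.Icc (t + 1) (t + m + 1)).image (fun j => (t, j)))
        ((Finset.Icc 1 (t - 1)).image (fun i => (i, t + m + 1))) := by
      simp only [Finset.disjoint_left, Finset.mem_image, Finset.mem_Icc]
      rintro ⟨a, b⟩ ⟨j', hj', h1, h2⟩ ⟨i', hi', h3, h4⟩
      omega
    have d2 : Disjoint (((Finset.Icc (t + 1) (t + m + 1)).image (fun j => (t, j)) ∪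
          (Finset.Icc 1 (t - 1)).image (fun i => (i, t + m + 1))))
        ((Finset.Icc (t + m + 2) (2 * m + 1)).image (fun j => (t + m + 1, j))) := by
      simp only [Finset.disjoint_left, Finset.mem_union, Finset.mem_image, Finset.mem_Icc]
      rintro ⟨a, b⟩ (⟨j', hj', h1, h2⟩ | ⟨i', hi', h3, h4⟩) ⟨j'', hj'', h5, h6⟩ <;> omega
    rw [Finset.card_union_of_disjoint d2, Finset.card_union_of_disjoint d1,
      Finset.card_image_of_injective _ (fun a b h => by simpa using h),
      Finset.card_image_of_injective _ (fun a b h => by simpa using h),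
      Finset.card_image_of_injective _ (fun a b h => by simpa using h),
      Nat.card_Icc, Nat.card_Icc, Nat.card_Icc]
    omega
  · have hset : (((Finset.Icc 1 (2 * m + 1)) ×ˢ (Finset.Icc 1 (2 * m + 1))).filter
        (fun p => p.1 < p.2 ∧ oddSheet m p.1 p.2 = m + 1)) =
        (Finset.Icc (m + 2) (2 * m + 1)).image (fun j => (m + 1, j)) := by
      ext ⟨i, j⟩
      simp only [Finset.mem_filter, Finset.mem_product, Finset.mem_image,
        Finset.mem_Icc, Prod.mk.injEq]
      simp only [oddSheet]
      constructor
      · rintro ⟨⟨⟨hi1, hi2⟩, hj1, hj2⟩, hij, hs⟩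
        split_ifs at hs with h1 h2
        · exact ⟨j, by omega, by omega, rfl⟩
        · omega
        · omega
      · rintro ⟨j', hj', hie, hje⟩
        subst hje; subst hie
        refine ⟨⟨⟨by omega, by omega⟩, by omega, by omega⟩, by omega, ?_⟩
        split_ifs <;> omega
    rw [hset, Finset.card_image_of_injective _ (fun a b h => by simpa using h), Nat.card_Icc]
    omega
end

section
/- Let n = 2m and let s be the sheet assignment on edges of K_{2m} defined by: s(i,j) = i if i ≤ m and j - i ≤ m; s(i,j) = j - m if i ≤ m and j - i ≥ m+1; s(i,j) = i - m if i ≥ m+1 (for i < j). If two edges (i,j) and (k,l) with i < k < j < l satisfy s(i,j) = s(k,l), then a contradiction follows; that is, no two crossing chords lie in the same sheet. -/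
/-- Otsuki's sheet assignment for `K_{2m}`. -/
def evenSheet (m i j : ℕ) : ℕ :=
  if i ≤ m ∧ j - i ≤ m then i
  else if i ≤ m then j - m
  else i - m

/-- In the canonical book representation of `K_{2m}`, no two crossing chords
lie in the same sheet. -/
theorem evenSheet_no_crossing (m i j k l : ℕ) (hi : 1 ≤ i) (hik : i < k)
    (hkj : k < j) (hjl : j < l) (hl : l ≤ 2 * m)
    (h : evenSheet m i j = evenSheet m k l) : False := by
  unfold evenSheet at h
  split_ifs at h <;> omega
end

section
/- Let n = 2m+1 and let s be the sheet assignment on edges of K_{2m+1} defined by: s(i,j) = i if i ≤ m+1 and j - i ≤ m+1; s(i,j) = j - m - 1 if i ≤ m+1 and j - i ≥ m+2; s(i,j) = i - m - 1 if i ≥ m+2 (for i < j). Then no two crossing chords lie in the same sheet: if i < k < j < l then s(i,j) ≠ s(k,l). -/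
/-- In the canonical book representation of `K_{2m+1}`, no two crossing chords
lie in the same sheet. -/
theorem oddSheet_no_crossing (m i j k l : ℕ) (hi : 1 ≤ i) (hik : i < k)
    (hkj : k < j) (hjl : j < l) (hl : l ≤ 2 * m + 1) :
    oddSheet m i j ≠ oddSheet m k l := by
  unfold oddSheet
  split_ifs <;> omega
end

section
/- The edges of the complete graph K_n, drawn as chords of a convex n-gon, can be colored with ⌈n/2⌉ colors so that any two crossing chords receive distinct colors, and this is impossible with fewer than ⌈n/2⌉ colors. -/
/-- Chords `(i,j)` and `(k,l)` of the convex `n`-gon cross. -/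
def Crosses (i j k l : ℕ) : Prop :=
  (i < k ∧ k < j ∧ j < l) ∨ (k < i ∧ i < l ∧ l < j)

/-- First endpoint of the `t`-th near-diameter chord of an odd polygon with `2m+1` vertices. -/
def chordFst (m t : ℕ) : ℕ := if t ≤ m then t + 1 else t - m

/-- Second endpoint of the `t`-th near-diameter chord of an odd polygon with `2m+1` vertices. -/
def chordSnd (m t : ℕ) : ℕ := if t ≤ m then t + m + 1 else t + 1

lemma chord_crosses (m t t' : ℕ) (hm : 2 ≤ m) (h : t < t') (h' : t' ≤ 2 * m)
    (hd1 : t' - t ≠ m) (hd2 : t' - t ≠ m + 1) :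
    Crosses (chordFst m t) (chordSnd m t) (chordFst m t') (chordSnd m t') := by
  unfold Crosses chordFst chordSnd
  split_ifs <;> omega

lemma chord_bounds (m t : ℕ) (hm : 1 ≤ m) (ht : t ≤ 2 * m) :
    1 ≤ chordFst m t ∧ chordFst m t < chordSnd m t ∧ chordSnd m t ≤ 2 * m + 1 := by
  unfold chordFst chordSnd
  split_ifs <;> omega

/-- The edges of `K_n`, drawn as chords of a convex `n`-gon, can be colored with
`⌈n/2⌉` colors so that crossing chords get distinct colors, and this is
impossible with fewer colors: the sheet-number of `K_n` is `⌈n/2⌉`. -/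
theorem sheetNumber_complete_graph (n : ℕ) (hn : 4 ≤ n) :
    (∃ c : ℕ → ℕ → Fin ((n + 1) / 2),
      ∀ i j k l, 1 ≤ i → i < j → j ≤ n → 1 ≤ k → k < l → l ≤ n →
        Crosses i j k l → c i j ≠ c k l) ∧
    (∀ r : ℕ, r < (n + 1) / 2 →
      ¬ ∃ c : ℕ → ℕ → Fin r,
        ∀ i j k l, 1 ≤ i → i < j → j ≤ n → 1 ≤ k → k < l → l ≤ n →
          Crosses i j k l → c i j ≠ c k l) := by
  constructor
  · -- Upper bound: color chord (i,j) by ((i+j) mod n) / 2.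
    refine ⟨fun i j => ⟨min ((if i + j < n then i + j else i + j - n) / 2) ((n - 1) / 2),
      by omega⟩, ?_⟩
    intro i j k l hi hij hjn hk hkl hln hcross
    simp only [ne_eq, Fin.mk.injEq]
    rcases hcross with ⟨h1, h2, h3⟩ | ⟨h1, h2, h3⟩ <;> split_ifs <;> omega
  · -- Lower bound
    rintro r hr ⟨c, hc⟩
    rcases Nat.even_or_odd n with ⟨m, hmn⟩ | ⟨m, hmn⟩
    · -- n = 2m : the m chords (t+1, t+1+m) pairwise cross
      have hm : 2 ≤ m := by omega
      have hrm : r < m := by omega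
      have hcard : Fintype.card (Fin r) < Fintype.card (Fin m) := by simpa using hrm
      obtain ⟨t1, t2, hne, heq⟩ :=
        Fintype.exists_ne_map_eq_of_card_lt
          (fun t : Fin m => c ((t : ℕ) + 1) ((t : ℕ) + 1 + m)) hcard
      have hvne : (t1 : ℕ) ≠ (t2 : ℕ) := fun h => hne (Fin.val_injective h)
      have b1 := t1.isLt
      have b2 := t2.isLt
      rcases lt_or_gt_of_ne hvne with hlt | hlt
      · exact hc ((t1 : ℕ) + 1) ((t1 : ℕ) + 1 + m) ((t2 : ℕ) + 1) ((t2 : ℕ) + 1 + m)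
          (by omega) (by omega) (by omega) (by omega) (by omega) (by omega)
          (Or.inl ⟨by omega, by omega, by omega⟩) heq
      · exact hc ((t1 : ℕ) + 1) ((t1 : ℕ) + 1 + m) ((t2 : ℕ) + 1) ((t2 : ℕ) + 1 + m)
          (by omega) (by omega) (by omega) (by omega) (by omega) (by omega)
          (Or.inr ⟨by omega, by omega, by omega⟩) heq
    · -- n = 2m+1 : the 2m+1 near-diameter chords, no 3 pairwise non-crossing
      have hm : 2 ≤ m := by omega
      have hrm : r ≤ m := by omega
      set g : ℕ → Fin r := fun t => c (chordFst m t) (chordSnd m t) with hg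
      have hcard : Fintype.card (Fin r) * 2 < Fintype.card (Fin n) := by
        simp only [Fintype.card_fin]; omega
      obtain ⟨y, hy⟩ :=
        Fintype.exists_lt_card_fiber_of_mul_lt_card (fun t : Fin n => g (t : ℕ)) hcard
      rw [Finset.two_lt_card] at hy
      obtain ⟨a, ha, b, hb, d, hd, hab, had, hbd⟩ := hy
      simp only [Finset.mem_filter] at ha hb hd
      have ega : g (a : ℕ) = y := ha.2
      have egb : g (b : ℕ) = y := hb.2
      have egd : g (d : ℕ) = y := hd.2
      have key : ∀ s s' : ℕ, s < s' → s' ≤ 2 * m → s' - s ≠ m → s' - s ≠ m + 1 →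
          g s = g s' → False := by
        intro s s' hss hbnd hd1 hd2 hcc
        obtain ⟨u1, u2, u3⟩ := chord_bounds m s (by omega) (by omega)
        obtain ⟨v1, v2, v3⟩ := chord_bounds m s' (by omega) hbnd
        exact hc (chordFst m s) (chordSnd m s) (chordFst m s') (chordSnd m s')
          u1 u2 (by omega) v1 v2 (by omega)
          (chord_crosses m s s' hm hss hbnd hd1 hd2) hcc
      have main : ∀ x y' z : ℕ, g x = g y' → g y' = g z → x < y' → y' < z → z ≤ 2 * m →
          False := by
        intro x y' z e1 e2 hxy hyz hz
        by_cases h1 : y' - x = m ∨ y' - x = m + 1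
        · by_cases h2 : z - y' = m ∨ z - y' = m + 1
          · exact key x z (by omega) (by omega) (by omega) (by omega) (e1.trans e2)
          · exact key y' z hyz hz (by omega) (by omega) e2
        · exact key x y' hxy (by omega) (by omega) (by omega) e1
      have bA : (a : ℕ) ≤ 2 * m := by have := a.isLt; omega
      have bB : (b : ℕ) ≤ 2 * m := by have := b.isLt; omega
      have bD : (d : ℕ) ≤ 2 * m := by have := d.isLt; omega
      have nab : (a : ℕ) ≠ (b : ℕ) := fun h => hab (Fin.val_injective h)
      have nad : (a : ℕ) ≠ (d : ℕ) := fun h => had (Fin.val_injective h)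
      have nbd : (b : ℕ) ≠ (d : ℕ) := fun h => hbd (Fin.val_injective h)
      have eab : g (a : ℕ) = g (b : ℕ) := ega.trans egb.symm
      have ead : g (a : ℕ) = g (d : ℕ) := ega.trans egd.symm
      have ebd : g (b : ℕ) = g (d : ℕ) := egb.trans egd.symm
      rcases lt_trichotomy (a : ℕ) (b : ℕ) with h1 | h1 | h1
      · rcases lt_trichotomy (b : ℕ) (d : ℕ) with h2 | h2 | h2
        · exact main _ _ _ eab ebd h1 h2 bD
        · exact absurd h2 nbd
        · rcases lt_trichotomy (a : ℕ) (d : ℕ) with h3 | h3 | h3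
          · exact main _ _ _ ead ebd.symm h3 h2 bB
          · exact absurd h3 nad
          · exact main _ _ _ ead.symm eab h3 h1 bB
      · exact absurd h1 nab
      · rcases lt_trichotomy (a : ℕ) (d : ℕ) with h2 | h2 | h2
        · exact main _ _ _ eab.symm ead h1 h2 bD
        · exact absurd h2 nad
        · rcases lt_trichotomy (b : ℕ) (d : ℕ) with h3 | h3 | h3
          · exact main _ _ _ ebd ead.symm h3 h2 bA
          · exact absurd h3 nbd
          · exact main _ _ _ ebd.symm eab.symm h3 h1 bA
end

section
/- Let n = 2m and let s be Otsuki's sheet assignment on edges of K_{2m} (s(i,j) = i if i ≤ m and j-i ≤ m; s(i,j) = j-m if i ≤ m and j-i ≥ m+1; s(i,j) = i-m if i ≥ m+1, for i < j). Then for all i < j with j ≥ i+2 and i ≤ 2m-1, the sheet indices s(i,j) and s(i+1,j) differ by at most 1, or one of them equals 1 while the other equals m (i.e., they are cyclically consecutive in Z/m). -/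
/-- In the canonical book representation of `K_{2m}`, the sheets of the edges
`(i,j)` and `(i+1,j)` differ by at most one, or are the cyclically consecutive
pair `{1, m}`. -/
theorem evenSheet_adjacent (m i j : ℕ) (hm : 1 ≤ m) (hi : 1 ≤ i)
    (hij : i + 2 ≤ j) (hj : j ≤ 2 * m) (hi' : i ≤ 2 * m - 1) :
    (evenSheet m i j ≤ evenSheet m (i + 1) j + 1 ∧
      evenSheet m (i + 1) j ≤ evenSheet m i j + 1) ∨
    (evenSheet m i j = 1 ∧ evenSheet m (i + 1) j = m) ∨
    (evenSheet m i j = m ∧ evenSheet m (i + 1) j = 1) := by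
  unfold evenSheet
  split <;> split <;> (try split) <;> (try split) <;> omega
end

section
/- Let n = 2m+1 and let s be Otsuki's sheet assignment on edges of K_{2m+1} (s(i,j) = i if i ≤ m+1 and j-i ≤ m+1; s(i,j) = j-m-1 if i ≤ m+1 and j-i ≥ m+2; s(i,j) = i-m-1 if i ≥ m+2, for i < j). Then for all i < j with j ≥ i+2, the sheet indices s(i,j) and s(i+1,j) are equal, differ by exactly 1, or are the pair {1, m+1}. -/
/-- In the canonical book representation of `K_{2m+1}`, the sheets of the edges
`(i,j)` and `(i+1,j)` are equal, differ by exactly one, or are the cyclically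
consecutive pair `{1, m+1}`. -/
theorem oddSheet_adjacent (m i j : ℕ) (hm : 1 ≤ m) (hi : 1 ≤ i)
    (hij : i + 2 ≤ j) (hj : j ≤ 2 * m + 1) :
    (oddSheet m i j = oddSheet m (i + 1) j) ∨
    (oddSheet m i j + 1 = oddSheet m (i + 1) j) ∨
    (oddSheet m (i + 1) j + 1 = oddSheet m i j) ∨
    (oddSheet m i j = 1 ∧ oddSheet m (i + 1) j = m + 1) ∨
    (oddSheet m i j = m + 1 ∧ oddSheet m (i + 1) j = 1) := by
  unfold oddSheet
  split_ifs <;> omega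
end

section
/- For every p ≥ 2, in the braid group B_p with Artin generators σ₁,...,σ_{p-1}, the word (σ₁σ₂⋯σ_{p-1}) · (σ₁⋯σ_{p-2})σ_{p-1}⁻¹ · (σ₁⋯σ_{p-3})σ_{p-2}⁻¹σ_{p-1}⁻¹ · ⋯ · σ₁⁻¹σ₂⁻¹⋯σ_{p-1}⁻¹ equals the identity; here the k-th factor (for k = 0,...,p-1) is (σ₁⋯σ_{p-1-k})·(σ_{p-k}⁻¹σ_{p-k+1}⁻¹⋯σ_{p-1}⁻¹). -/
namespace BraidWordAux

variable {G : Type*} [Group G]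

/-- ascending product σ(s+1) σ(s+2) ⋯ σ(s+n) -/
def asc (σ : ℕ → G) (s : ℕ) : ℕ → G
  | 0 => 1
  | n+1 => asc σ s n * σ (s + n + 1)

/-- descending product σ(s+n) σ(s+n-1) ⋯ σ(s+1) -/
def desc (σ : ℕ → G) (s : ℕ) : ℕ → G
  | 0 => 1
  | n+1 => σ (s + n + 1) * desc σ s n

/-- D(s,n) = asc(s,n) asc(s,n-1) ⋯ asc(s,1) -/
def DD (σ : ℕ → G) (s : ℕ) : ℕ → G
  | 0 => 1
  | n+1 => asc σ s (n+1) * DD σ s n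

/-- E(n,s) = desc(s,n) desc(s+1,n-1) ⋯ desc(s+n-1,1) -/
def EE (σ : ℕ → G) : ℕ → ℕ → G
  | 0, _ => 1
  | n+1, s => desc σ s (n+1) * EE σ n (s+1)

def FF (σ : ℕ → G) (p k : ℕ) : G := asc σ 0 (p-1-k) * (desc σ (p-1-k) k)⁻¹

def TT (σ : ℕ → G) (p : ℕ) : ℕ → G
  | 0 => 1
  | r+1 => FF σ p (p-(r+1)) * TT σ p r

def SS (σ : ℕ → G) (p : ℕ) : ℕ → G
  | 0 => 1
  | r+1 => SS σ p r * desc σ r (p-1-r)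

section

variable (p : ℕ) (σ : ℕ → G)
variable (hbraid : ∀ i, 1 ≤ i → i ≤ p - 2 →
    σ i * σ (i + 1) * σ i = σ (i + 1) * σ i * σ (i + 1))
variable (hcomm : ∀ i j, 1 ≤ i → i ≤ p - 1 → 1 ≤ j → j ≤ p - 1 → i + 2 ≤ j →
    σ i * σ j = σ j * σ i)

include hcomm in
lemma comm_asc (s m j : ℕ) (h2 : s + m + 2 ≤ j) (hj : j ≤ p - 1) :
    σ j * asc σ s m = asc σ s m * σ j := by
  induction m with
  | zero => simp [asc]
  | succ n ih =>
    have h := hcomm (s + n + 1) j (by omega) (by omega) (by omega) hj (by omega)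
    rw [asc, ← mul_assoc, ih (by omega), mul_assoc, ← h, mul_assoc]

include hcomm in
lemma comm_desc (s m j : ℕ) (h2 : s + m + 2 ≤ j) (hj : j ≤ p - 1) :
    σ j * desc σ s m = desc σ s m * σ j := by
  induction m with
  | zero => simp [desc]
  | succ n ih =>
    have h := hcomm (s + n + 1) j (by omega) (by omega) (by omega) hj (by omega)
    rw [desc, ← mul_assoc, ← h, mul_assoc, ih (by omega), ← mul_assoc]

include hcomm in
lemma comm_DD (s m j : ℕ) (h2 : s + m + 2 ≤ j) (hj : j ≤ p - 1) :
    σ j * DD σ s m = DD σ s m * σ j := by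
  induction m with
  | zero => simp [DD]
  | succ n ih =>
    rw [DD, ← mul_assoc, comm_asc p σ hcomm s (n+1) j h2 hj, mul_assoc,
      ih (by omega), ← mul_assoc]

include hcomm in
lemma comm_desc_DD (s m s' m' : ℕ) (h2 : s + m + 2 ≤ s' + 1) (hj : s' + m' ≤ p - 1) :
    desc σ s' m' * DD σ s m = DD σ s m * desc σ s' m' := by
  induction m' with
  | zero => simp [desc]
  | succ n ih =>
    rw [desc, mul_assoc, ih (by omega), ← mul_assoc,
      comm_DD p σ hcomm s m (s' + n + 1) (by omega) (by omega), mul_assoc]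

include hbraid hcomm in
/-- the key push lemma: σ_j (σ_{s+n} ⋯ σ_{s+1}) = (σ_{s+n} ⋯ σ_{s+1}) σ_{j+1} -/
lemma push_desc (s : ℕ) : ∀ n j, s + 1 ≤ j → j + 1 ≤ s + n → s + n ≤ p - 1 →
    σ j * desc σ s n = desc σ s n * σ (j + 1) := by
  intro n
  induction n with
  | zero => intro j h1 h2 h3; omega
  | succ n ih =>
    intro j h1 h2 h3
    rcases Nat.lt_or_ge j (s + n) with hlt | hge
    · -- j + 1 ≤ s + n : commute past top letter then IH
      have hc := hcomm j (s + n + 1) (by omega) (by omega) (by omega) (by omega) (by omega)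
      rw [desc, ← mul_assoc, hc, mul_assoc, ih j h1 (by omega) (by omega), ← mul_assoc]
    · -- j = s + n
      have hj : j = s + n := by omega
      subst hj
      obtain ⟨m, rfl⟩ : ∃ m, n = m + 1 := ⟨n - 1, by omega⟩
      have hb := hbraid (s + m + 1) (by omega) (by omega)
      have hcd := comm_desc p σ hcomm s m (s + m + 2) (by omega) (by omega)
      show σ (s+m+1) * (σ (s+m+2) * (σ (s+m+1) * desc σ s m)) =
        (σ (s+m+2) * (σ (s+m+1) * desc σ s m)) * σ (s+m+1+1)
      have : s + m + 1 + 1 = s + m + 2 := by omega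
      rw [this, ← mul_assoc, ← mul_assoc, hb, mul_assoc, mul_assoc, hcd,
        ← mul_assoc, ← mul_assoc, ← mul_assoc]

include hbraid hcomm in
lemma swap_desc_desc (s n : ℕ) : ∀ m s', s ≤ s' → s' + m + 1 ≤ s + n → s + n ≤ p - 1 →
    desc σ s n * desc σ (s'+1) m = desc σ s' m * desc σ s n := by
  intro m
  induction m with
  | zero => intro s' _ _ _; simp [desc]
  | succ m ih =>
    intro s' h1 h2 h3
    have hp := push_desc p σ hbraid hcomm s n (s' + m + 1) (by omega) (by omega) h3
    have hp' : desc σ s n * σ (s' + m + 1 + 1) = σ (s' + m + 1) * desc σ s n := hp.symm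
    have e : s' + 1 + m + 1 = s' + m + 1 + 1 := by omega
    rw [desc, desc, e, ← mul_assoc, hp', mul_assoc, ih s' h1 (by omega) h3, ← mul_assoc]

include hbraid hcomm in
lemma swap_desc_EE (s n : ℕ) : ∀ m s', s ≤ s' → s' + m + 1 ≤ s + n → s + n ≤ p - 1 →
    desc σ s n * EE σ m (s'+1) = EE σ m s' * desc σ s n := by
  intro m
  induction m with
  | zero => intro s' _ _ _; simp [EE]
  | succ m ih =>
    intro s' h1 h2 h3
    rw [EE, ← mul_assoc, swap_desc_desc p σ hbraid hcomm s n (m+1) s' h1 (by omega) h3,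
      mul_assoc, ih (s'+1) (by omega) (by omega) h3, ← mul_assoc, ← EE]

include hbraid hcomm in
lemma EE_snoc (n s : ℕ) (h : s + n + 1 ≤ p - 1) :
    EE σ (n+1) s = EE σ n s * desc σ s (n+1) := by
  rw [EE, swap_desc_EE p σ hbraid hcomm s (n+1) n s (le_refl s) (by omega) (by omega)]

include hbraid hcomm in
lemma DD_eq_EE : ∀ n, ∀ s, s + n ≤ p - 1 → DD σ s n = EE σ n s := by
  intro n
  induction n using Nat.strong_induction_on with
  | _ n ih =>
    match n with
    | 0 => intro s _; simp [DD, EE]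
    | 1 => intro s _; simp [DD, EE, asc, desc]
    | (m+2) =>
      intro s h
      have h1 : DD σ s (m+1) = EE σ (m+1) s := ih (m+1) (by omega) s (by omega)
      have h0 : DD σ s m = EE σ m s := ih m (by omega) s (by omega)
      have h6a : EE σ (m+1) s = EE σ m s * desc σ s (m+1) :=
        EE_snoc p σ hbraid hcomm m s (by omega)
      have h6b : EE σ (m+2) s = EE σ (m+1) s * desc σ s (m+2) :=
        EE_snoc p σ hbraid hcomm (m+1) s (by omega)
      have hDrw : DD σ s (m+1) = DD σ s m * desc σ s (m+1) := by rw [h1, h6a, h0]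
      have hcd := comm_DD p σ hcomm s m (s + m + 2) (by omega) (by omega)
      calc DD σ s (m+2) = asc σ s (m+1) * σ (s+m+2) * (DD σ s m * desc σ s (m+1)) := by
            rw [DD, ← hDrw]; rfl
        _ = asc σ s (m+1) * (σ (s+m+2) * DD σ s m * desc σ s (m+1)) := by
            simp only [mul_assoc]
        _ = asc σ s (m+1) * (DD σ s m * (σ (s+m+2) * desc σ s (m+1))) := by
            rw [hcd]; simp only [mul_assoc]
        _ = (asc σ s (m+1) * DD σ s m) * desc σ s (m+2) := by
            rw [desc]; simp only [mul_assoc]; rfl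
        _ = DD σ s (m+1) * desc σ s (m+2) := by rw [DD]
        _ = EE σ (m+2) s := by rw [h1, ← h6b]

include hcomm in
lemma CT : ∀ r, r + 1 ≤ p → TT σ p (r+1) = DD σ 0 r * (SS σ p (r+1))⁻¹ := by
  intro r
  induction r with
  | zero =>
    intro hr
    have e0 : p - 1 - (p - 1) = 0 := by omega
    have e1 : p - 1 = p - 1 := rfl
    show FF σ p (p-1) * TT σ p 0 = DD σ 0 0 * (SS σ p 0 * desc σ 0 (p-1-0))⁻¹
    rw [FF, e0]
    simp [TT, DD, SS, asc]
  | succ r ih =>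
    intro hr
    have e1 : p - 1 - (p - (r+2)) = r + 1 := by omega
    have e2 : p - (r + 2) = p - 1 - (r + 1) := by omega
    have hcd : desc σ (r+1) (p-1-(r+1)) * DD σ 0 r = DD σ 0 r * desc σ (r+1) (p-1-(r+1)) :=
      comm_desc_DD p σ hcomm 0 r (r+1) (p-1-(r+1)) (by omega) (by omega)
    have hcd' : (desc σ (r+1) (p-1-(r+1)))⁻¹ * DD σ 0 r
        = DD σ 0 r * (desc σ (r+1) (p-1-(r+1)))⁻¹ := (Commute.inv_left hcd).eq
    show FF σ p (p-(r+2)) * TT σ p (r+1) = DD σ 0 (r+1) * (SS σ p (r+1) * desc σ (r+1) (p-1-(r+1)))⁻¹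
    rw [FF, e1, ih (by omega), e2, mul_inv_rev, DD]
    calc asc σ 0 (r+1) * (desc σ (r+1) (p-1-(r+1)))⁻¹ * (DD σ 0 r * (SS σ p (r+1))⁻¹)
        = asc σ 0 (r+1) * ((desc σ (r+1) (p-1-(r+1)))⁻¹ * DD σ 0 r * (SS σ p (r+1))⁻¹) := by
          simp only [mul_assoc]
      _ = asc σ 0 (r+1) * (DD σ 0 r * ((desc σ (r+1) (p-1-(r+1)))⁻¹ * (SS σ p (r+1))⁻¹)) := by
          rw [hcd']; simp only [mul_assoc]
      _ = asc σ 0 (r+1) * DD σ 0 r * ((desc σ (r+1) (p-1-(r+1)))⁻¹ * (SS σ p (r+1))⁻¹) := by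
          simp only [mul_assoc]

end

section lists

variable (σ : ℕ → G)

lemma list_asc : ∀ n, ((List.range n).map (fun t => σ (t + 1))).prod = asc σ 0 n := by
  intro n
  induction n with
  | zero => simp [asc]
  | succ n ih =>
    rw [List.range_succ, List.map_append, List.prod_append, ih]
    simp [asc, Nat.zero_add]

lemma list_inv_desc : ∀ n s, ((List.range n).map (fun t => (σ (s + t + 1))⁻¹)).prod
    = (desc σ s n)⁻¹ := by
  intro n s
  induction n with
  | zero => simp [desc]
  | succ n ih =>
    rw [List.range_succ, List.map_append, List.prod_append, ih]
    simp [desc, mul_inv_rev]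

lemma list_EE : ∀ n s, EE σ n s = ((List.range n).map (fun k => desc σ (s + k) (n - k))).prod := by
  intro n
  induction n with
  | zero => intro s; simp [EE]
  | succ n ih =>
    intro s
    rw [List.range_succ_eq_map, List.map_cons, List.prod_cons, List.map_map]
    have : ((fun k => desc σ (s + k) (n + 1 - k)) ∘ Nat.succ)
        = fun k => desc σ (s + 1 + k) (n - k) := by
      funext k
      show desc σ (s + (k+1)) (n + 1 - (k+1)) = desc σ (s + 1 + k) (n - k)
      congr 1 <;> omega
    rw [this, EE, ih (s+1)]
    norm_num

lemma list_SS (p : ℕ) : ∀ r, SS σ p r = ((List.range r).map (fun u => desc σ u (p - 1 - u))).prod := by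
  intro r
  induction r with
  | zero => simp [SS]
  | succ r ih =>
    rw [List.range_succ, List.map_append, List.prod_append, ← ih, SS]
    simp

lemma SS_eq_EE (p : ℕ) : SS σ p (p - 1) = EE σ (p - 1) 0 := by
  rw [list_SS, list_EE]
  congr 1
  apply List.map_congr_left
  intro a _
  congr 1
  omega

lemma conn (p : ℕ) : ∀ r, r ≤ p →
    ((List.range' (p - r) r).map (fun k =>
      ((List.range (p - 1 - k)).map (fun t => σ (t + 1))).prod *
      ((List.range k).map (fun t => (σ (p - k + t))⁻¹)).prod)).prod = TT σ p r := by
  intro r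
  induction r with
  | zero => simp [TT]
  | succ r ih =>
    intro hr
    rw [List.range'_succ, List.map_cons, List.prod_cons]
    have e : p - (r + 1) + 1 = p - r := by omega
    rw [e, ih (by omega), TT]
    congr 1
    rw [FF, ← list_asc]
    have e1 : p - 1 - (p - (r+1)) = p - 1 - (p - (r + 1)) := rfl
    congr 1
    rw [← list_inv_desc]
    congr 1
    apply List.map_congr_left
    intro a _
    congr 2
    omega

end lists

end BraidWordAux

open BraidWordAux in
/-- In the braid group `B_p` (equivalently, in any group whose elements
`σ 1, ..., σ (p-1)` satisfy the braid relations), the word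
`(σ₁⋯σ_{p-1}) · (σ₁⋯σ_{p-2})σ_{p-1}⁻¹ · ⋯ · σ₁⁻¹σ₂⁻¹⋯σ_{p-1}⁻¹`,
whose `k`-th factor (for `k = 0, ..., p-1`) is
`(σ₁⋯σ_{p-1-k})·(σ_{p-k}⁻¹⋯σ_{p-1}⁻¹)`, is the identity. -/
theorem braid_word_Bp {G : Type*} [Group G] (p : ℕ) (hp : 2 ≤ p) (σ : ℕ → G)
    (hbraid : ∀ i, 1 ≤ i → i ≤ p - 2 → σ i * σ (i + 1) * σ i = σ (i + 1) * σ i * σ (i + 1))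
    (hcomm : ∀ i j, 1 ≤ i → i ≤ p - 1 → 1 ≤ j → j ≤ p - 1 → i + 2 ≤ j →
      σ i * σ j = σ j * σ i) :
    ((List.range p).map (fun k =>
      ((List.range (p - 1 - k)).map (fun t => σ (t + 1))).prod *
      ((List.range k).map (fun t => (σ (p - k + t))⁻¹)).prod)).prod = 1 := by
  have hpp : p - p = 0 := by omega
  rw [List.range_eq_range', show (0:ℕ) = p - p from hpp.symm]
  rw [conn σ p p (le_refl p)]
  obtain ⟨q, rfl⟩ : ∃ q, p = q + 1 := ⟨p - 1, by omega⟩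
  rw [CT (q+1) σ hcomm q (le_refl _)]
  have e0 : q + 1 - 1 - q = 0 := by omega
  have e1 : q + 1 - 1 = q := by omega
  rw [SS, e0]
  have hSS : SS σ (q+1) q = EE σ q 0 := by
    have := SS_eq_EE σ (q+1)
    rwa [e1] at this
  have hDE : DD σ 0 q = EE σ q 0 :=
    DD_eq_EE (q+1) σ hbraid hcomm q 0 (by omega)
  rw [hSS, hDE]
  simp [desc]
end

section
/- Let n = 2m and define, for edges (i,j) and (k,l) of K_{2m} with 1 ≤ i < k < j < l ≤ 2m, the relation '(k,l) is over (i,j)' to hold iff i ≤ m and k ≥ m+1, and '(i,j) is over (k,l)' otherwise. Then this over-relation is consistent with the sheet assignment s of Otsuki's canonical book representation: (k,l) is over (i,j) if and only if s(k,l) < s(i,j), where s(i,j) = i if i ≤ m and j-i ≤ m; s(i,j) = j-m if i ≤ m and j-i ≥ m+1; s(i,j) = i-m if i ≥ m+1. -/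
/-- For crossing chords `i < k < j < l` in the canonical book representation of
`K_{2m}`, the edge `(k,l)` passes over the edge `(i,j)` (i.e. `i ≤ m` and
`k ≥ m+1`) if and only if `(k,l)` lies in a lower-indexed sheet. -/
theorem evenSheet_over_iff (m i j k l : ℕ) (hi : 1 ≤ i) (hik : i < k)
    (hkj : k < j) (hjl : j < l) (hl : l ≤ 2 * m) :
    (i ≤ m ∧ m + 1 ≤ k) ↔ evenSheet m k l < evenSheet m i j := by
  unfold evenSheet
  split_ifs <;> omega
end
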